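/- Let G be a finite connected simple graph on at least 2 vertices. Then ml(G) ≤ 2·μ(G), i.e. G has a spanning tree with at most twice as many leaves as the path covering number of G. -/

import Mathlib

open SimpleGraph

/-- Number of leaves (degree-one vertices) of a graph. -/
noncomputable def leafCount {V : Type} (T : SimpleGraph V) : ℕ :=
  Set.ncard {v | (T.neighborSet v).ncard = 1}

/-- The minimum leaf number: the minimum number of leaves of a spanning tree. -/
noncomputable def ml {V : Type} (G : SimpleGraph V) : ℕ :=
  sInf {k | ∃ T : SimpleGraph V, T ≤ G ∧ T.IsTree ∧ leafCount T = k}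

/-- `S` is a vertex-disjoint path cover of `G`: each member is the vertex set of a
path of `G`, and the members partition the vertex set. -/
def IsPathCover {V : Type} (G : SimpleGraph V) (S : Finset (Set V)) : Prop :=
  (∀ A ∈ S, ∃ (u v : V) (p : G.Walk u v), p.IsPath ∧ {x | x ∈ p.support} = A) ∧
  (∀ x : V, ∃! A, A ∈ S ∧ x ∈ A)

/-- The path covering number. -/
noncomputable def pathCoverNumber {V : Type} (G : SimpleGraph V) : ℕ :=
  sInf {k | ∃ S : Finset (Set V), IsPathCover G S ∧ S.card = k}


section Aux
open SimpleGraph Walk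
variable {V : Type}


lemma not_reachable_of_isolated {H : SimpleGraph V} {x y : V}
    (hiso : ∀ z, ¬H.Adj x z) (hxy : x ≠ y) : ¬H.Reachable x y := by
  rintro ⟨w⟩
  cases w with
  | nil => exact hxy rfl
  | cons h _ => exact hiso _ h

lemma acyclic_sup_edge {H : SimpleGraph V} (hH : H.IsAcyclic) {x y : V}
    (hr : ¬H.Reachable x y) : (H ⊔ edge x y).IsAcyclic := by
  have hxy : x ≠ y := fun h => hr (h ▸ Reachable.refl x)
  intro v c hc
  by_cases he : s(x, y) ∈ c.edges
  · have := (adj_and_reachable_delete_edges_iff_exists_cycle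
      (G := H ⊔ edge x y) (v := x) (w := y)).2 ⟨v, c, hc, he⟩
    refine hr (this.2.mono ?_)
    intro a b hab
    simp only [deleteEdges_adj, sdiff_adj, sup_adj, edge_adj, fromEdgeSet_adj, Set.mem_singleton_iff,
      Sym2.eq_iff] at hab
    tauto
  · have hsub : ∀ e ∈ c.edges, e ∈ H.edgeSet := by
      intro e hec
      have : e ∈ (H ⊔ edge x y).edgeSet := c.edges_subset_edgeSet hec
      rw [edgeSet_sup, edge_edgeSet_of_ne hxy] at this
      rcases this with h | h
      · exact h
      · exact absurd (h ▸ hec) he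
    exact hH (c.transfer H hsub) (hc.transfer hsub)

lemma exists_cross {G H : SimpleGraph V} :
    ∀ {a b : V} (_ : G.Walk a b), ¬H.Reachable a b →
      ∃ x y, G.Adj x y ∧ ¬H.Reachable x y := by
  intro a b p
  induction p with
  | nil => exact fun h => absurd (Reachable.refl _) h
  | @cons a c b h q ih =>
    intro hr
    by_cases h2 : H.Reachable a c
    · exact ih (fun hq => hr (h2.trans hq))
    · exact ⟨a, c, h, h2⟩

lemma extend_to_tree [Fintype V] {G : SimpleGraph V} (hG : G.Connected) :
    ∀ (n : ℕ) (H : SimpleGraph V), H ≤ G → H.IsAcyclic →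
      Nat.card (Sym2 V) + 1 - H.edgeSet.ncard ≤ n →
      ∃ T, H ≤ T ∧ T ≤ G ∧ T.IsTree := by
  intro n
  induction n with
  | zero =>
    intro H _ _ hm
    exfalso
    have h1 : H.edgeSet.ncard ≤ Nat.card (Sym2 V) := by
      simpa [Set.ncard_univ] using Set.ncard_le_ncard (Set.subset_univ H.edgeSet) Set.finite_univ
    omega
  | succ n ih =>
    intro H hHG hHa hm
    by_cases hc : H.Connected
    · exact ⟨H, le_rfl, hHG, ⟨hc, hHa⟩⟩
    · rw [connected_iff] at hc
      push_neg at hc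
      have hne : Nonempty V := hG.nonempty
      have hpc : ¬H.Preconnected := fun hp => (hc hp).false hne.some
      obtain ⟨a, b, hab⟩ : ∃ a b, ¬H.Reachable a b := by
        unfold SimpleGraph.Preconnected at hpc
        push_neg at hpc
        exact hpc
      obtain ⟨x, y, hxy, hr⟩ := exists_cross ((hG.preconnected a b).some) hab
      have hxyne : x ≠ y := fun h => hr (h ▸ Reachable.refl x)
      have hnadj : ¬H.Adj x y := fun h => hr h.reachable
      set H' := H ⊔ edge x y with hH'
      have hle : H' ≤ G := by
        apply sup_le hHG
        intro u v huv
        rw [edge_adj] at huv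
        rcases huv.1 with ⟨rfl, rfl⟩ | ⟨rfl, rfl⟩
        · exact hxy
        · exact hxy.symm
      have hacy : H'.IsAcyclic := acyclic_sup_edge hHa hr
      have hcardedge : H'.edgeSet.ncard = H.edgeSet.ncard + 1 := by
        rw [hH', edgeSet_sup, edge_edgeSet_of_ne hxyne, Set.union_singleton,
          Set.ncard_insert_of_notMem (by rwa [SimpleGraph.mem_edgeSet]) H.edgeSet.toFinite]
      obtain ⟨T, h1, h2, h3⟩ := ih H' hle hacy (by omega)
      exact ⟨T, le_sup_left.trans h1, h2, h3⟩

lemma spanningCoe_sup' {G : SimpleGraph V} (A B : G.Subgraph) :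
    (A ⊔ B).spanningCoe = A.spanningCoe ⊔ B.spanningCoe := rfl

lemma spanningCoe_subgraphOfAdj {G : SimpleGraph V} {u w : V} (h : G.Adj u w) :
    (G.subgraphOfAdj h).spanningCoe = edge u w := by
  ext a b
  simp only [Subgraph.spanningCoe_adj, subgraphOfAdj_adj, edge_adj, Sym2.eq_iff]
  constructor
  · rintro (⟨rfl, rfl⟩ | ⟨rfl, rfl⟩)
    · exact ⟨Or.inl ⟨rfl, rfl⟩, h.ne⟩
    · exact ⟨Or.inr ⟨rfl, rfl⟩, h.ne'⟩
  · rintro ⟨(⟨rfl, rfl⟩ | ⟨rfl, rfl⟩), _⟩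
    · exact Or.inl ⟨rfl, rfl⟩
    · exact Or.inr ⟨rfl, rfl⟩

lemma internal_two_neighbors {G : SimpleGraph V} {x : V} :
    ∀ {u v : V} (p : G.Walk u v), p.IsPath → x ∈ p.support → x ≠ u → x ≠ v →
    ∃ a b, a ≠ b ∧ p.toSubgraph.Adj x a ∧ p.toSubgraph.Adj x b := by
  intro u v p
  induction p with
  | nil =>
    intro _ hx hxu _
    simp at hx
    exact absurd hx hxu
  | @cons u w v h q ih =>
    intro hp hx hxu hxv
    rw [support_cons, List.mem_cons] at hx
    rcases hx with rfl | hx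
    · exact absurd rfl hxu
    by_cases hxw : x = w
    · subst hxw
      have hnn : ¬q.Nil := fun hn => hxv (Walk.Nil.eq hn)
      have hlen : 0 < q.length := by rwa [Walk.not_nil_iff_lt_length] at hnn
      have hadj : q.toSubgraph.Adj x (q.getVert 1) := by
        have := q.toSubgraph_adj_getVert (i := 0) hlen
        simpa using this
      have hmem : q.getVert 1 ∈ q.support :=
        q.mem_verts_toSubgraph.1 hadj.snd_mem
      refine ⟨u, q.getVert 1, ?_, ?_, Or.inr hadj⟩
      · rintro rfl
        exact ((Walk.cons_isPath_iff _ _).1 hp).2 hmem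
      · exact Or.inl (by simp)
    · obtain ⟨a, b, hab, h1, h2⟩ := ih hp.of_cons hx hxw hxv
      exact ⟨a, b, hab, Or.inr h1, Or.inr h2⟩

lemma path_toSubgraph_acyclic {G : SimpleGraph V} {u v : V} (p : G.Walk u v)
    (hp : p.IsPath) : p.toSubgraph.spanningCoe.IsAcyclic := by
  induction p with
  | nil =>
    rename_i a
    have hb : (G.singletonSubgraph a).spanningCoe = ⊥ := by
      ext x y
      simp [singletonSubgraph_adj]
    rw [show (Walk.nil : G.Walk a a).toSubgraph = G.singletonSubgraph a from rfl, hb]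
    exact isAcyclic_bot
  | @cons u w v h q ih =>
    have hq := hp.of_cons
    have hu : u ∉ q.support := ((Walk.cons_isPath_iff _ _).1 hp).2
    have key : (cons h q).toSubgraph.spanningCoe
        = q.toSubgraph.spanningCoe ⊔ edge u w := by
      rw [show (cons h q).toSubgraph = G.subgraphOfAdj h ⊔ q.toSubgraph from rfl,
        spanningCoe_sup', spanningCoe_subgraphOfAdj, sup_comm]
    rw [key]
    apply acyclic_sup_edge (ih hq)
    apply not_reachable_of_isolated
    · intro z hz
      exact hu (q.mem_verts_toSubgraph.1 hz.fst_mem)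
    · rintro rfl
      exact hu q.start_mem_support

end Aux

theorem stmt_1 {V : Type} [Fintype V] (G : SimpleGraph V)
    (hconn : G.Connected) (hcard : 2 ≤ Fintype.card V) :
    ml G ≤ 2 * pathCoverNumber G := by
  classical
  have hne : {k | ∃ S : Finset (Set V), IsPathCover G S ∧ S.card = k}.Nonempty := by
    refine ⟨_, Finset.univ.image (fun x : V => ({x} : Set V)), ⟨?_, ?_⟩, rfl⟩
    · intro A hA
      simp only [Finset.mem_image, Finset.mem_univ, true_and] at hA
      obtain ⟨x, rfl⟩ := hA
      exact ⟨x, x, Walk.nil, Walk.IsPath.nil, by ext y; simp⟩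
    · intro x
      refine ⟨{x}, ⟨by simp, rfl⟩, ?_⟩
      rintro A ⟨hA, hxA⟩
      simp only [Finset.mem_image, Finset.mem_univ, true_and] at hA
      obtain ⟨y, rfl⟩ := hA
      simp only [Set.mem_singleton_iff] at hxA
      subst hxA; rfl
  obtain ⟨S, hS, hcardS⟩ := Nat.sInf_mem hne
  choose fu fv fp hpath hsupp using fun (A : {x // x ∈ S}) => hS.1 A.1 A.2
  set F : SimpleGraph V := ⨆ A : {x // x ∈ S}, ((fp A).toSubgraph.spanningCoe) with hF
  have hFG : F ≤ G := iSup_le fun A => Subgraph.spanningCoe_le _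
  have huniq : ∀ {x : V} {A B : Set V}, A ∈ S → B ∈ S → x ∈ A → x ∈ B → A = B := by
    intro x A B hA hB hxA hxB
    obtain ⟨C, _, hC⟩ := hS.2 x
    rw [hC A ⟨hA, hxA⟩, hC B ⟨hB, hxB⟩]
  have hmemA : ∀ (A : {x // x ∈ S}) {x y : V},
      ((fp A).toSubgraph.spanningCoe).Adj x y → x ∈ A.1 := by
    intro A x y h
    have h' : (fp A).toSubgraph.Adj x y := h
    have : x ∈ (fp A).support := (fp A).mem_verts_toSubgraph.1 h'.fst_mem
    rw [← hsupp A]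
    exact this
  have hwalk : ∀ (A : {x // x ∈ S}) {a b : V} (w : F.Walk a b), a ∈ A.1 →
      ∀ e ∈ w.edges, e ∈ ((fp A).toSubgraph.spanningCoe).edgeSet := by
    intro A a b w
    induction w with
    | nil => simp
    | @cons a c b h q ihq =>
      intro ha e he
      obtain ⟨B, hB⟩ : ∃ B, ((fp B).toSubgraph.spanningCoe).Adj a c := by
        rw [hF, iSup_adj] at h; exact h
      obtain rfl : B = A := Subtype.ext (huniq B.2 A.2 (hmemA B hB) ha)
      have hc : c ∈ B.1 := hmemA B hB.symm
      rw [Walk.edges_cons, List.mem_cons] at he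
      rcases he with rfl | he
      · exact hB
      · exact ihq hc e he
  have hFacyclic : F.IsAcyclic := by
    intro v c hc
    obtain ⟨A0, ⟨hA0S, hvA0⟩, -⟩ := hS.2 v
    have hsub := hwalk ⟨A0, hA0S⟩ c hvA0
    exact path_toSubgraph_acyclic _ (hpath ⟨A0, hA0S⟩)
      (c.transfer _ hsub) (hc.transfer hsub)
  obtain ⟨T, hFT, hTG, hTtree⟩ :=
    extend_to_tree hconn (Nat.card (Sym2 V) + 1) F hFG hFacyclic (Nat.sub_le _ _)
  have hml : ml G ≤ leafCount T := Nat.sInf_le ⟨T, hTG, hTtree, rfl⟩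
  set E : Finset V := S.attach.biUnion (fun A => {fu A, fv A}) with hE
  have hsubE : {x | (T.neighborSet x).ncard = 1} ⊆ ↑E := by
    intro x hx
    obtain ⟨A0, ⟨hA0S, hxA0⟩, -⟩ := hS.2 x
    set A : {y // y ∈ S} := ⟨A0, hA0S⟩ with hA
    by_contra hxE
    have hxu : x ≠ fu A := by
      rintro rfl
      exact hxE (by simp [hE]; exact ⟨A.1, A.2, Or.inl rfl⟩)
    have hxv : x ≠ fv A := by
      rintro rfl
      exact hxE (by simp [hE]; exact ⟨A.1, A.2, Or.inr rfl⟩)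
    have hxsupp : x ∈ (fp A).support := by
      have := hsupp A
      rw [Set.ext_iff] at this
      exact (this x).2 hxA0
    obtain ⟨a, b, hab, h1, h2⟩ :=
      internal_two_neighbors (fp A) (hpath A) hxsupp hxu hxv
    have hFa : F.Adj x a := by
      rw [hF, iSup_adj]; exact ⟨A, h1⟩
    have hFb : F.Adj x b := by
      rw [hF, iSup_adj]; exact ⟨A, h2⟩
    have h2le : 1 < (T.neighborSet x).ncard := by
      rw [Set.one_lt_ncard_iff (T.neighborSet x).toFinite]
      exact ⟨a, b, hFT hFa, hFT hFb, hab⟩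
    rw [Set.mem_setOf_eq] at hx
    omega
  have hleaf : leafCount T ≤ E.card := by
    rw [leafCount, ← Set.ncard_coe_finset]
    exact Set.ncard_le_ncard hsubE (E : Set V).toFinite
  have hEcard : E.card ≤ 2 * S.card := by
    calc E.card ≤ ∑ A ∈ S.attach, ({fu A, fv A} : Finset V).card :=
          Finset.card_biUnion_le
    _ ≤ ∑ _A ∈ S.attach, 2 :=
          Finset.sum_le_sum (fun A _ => (Finset.card_insert_le _ _).trans (by simp))
    _ = 2 * S.card := by simp [Finset.card_attach, mul_comm]
  rw [pathCoverNumber, ← hcardS]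
  omega
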